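/- Fix reals y > 0, G < 0, G_z, G_zz, G_t. For π, η₁, η₂ ∈ ℝ and φ ∈ L²(ν) define 𝒜(π, η₁, η₂, φ) := y G_t − π ( μ − r + σ η₁ − ∫ γ dν ) + y G ( η₁² + η₂² − ∫ φ dν ) + y G_z ( a + b (ρ_W η₁ + ρ̄_W η₂) ) + (1/2) y G_zz b² + y G_z b (ρ_W η₁ + ρ̄_W η₂) + ∫ ( − π γ(p) + y G φ(p) ) (1 + φ(p)) ν(dp). Then min over π ∈ ℝ of sup over (η₁, η₂) ∈ ℝ² and φ ∈ L²(ν) of 𝒜(π, η₁, η₂, φ) equals y ( G_t + α G_z + (1/2) b² G_zz − β b² G_z²/G + λ G ), where α := a − 2 ρ_W σ b (μ − r)/Σ, β := (ρ̄_W² σ² + m)/Σ, λ := (μ − r)²/Σ; moreover the saddle point is attained at π* = −(2 y G/Σ)( μ − r − σ b ρ_W G_z/G ), η₁* = − σ(μ − r)/Σ − ρ_W b (m/Σ)(G_z/G), η₂* = − G_z b ρ̄_W/G, and φ*(p) = −(γ(p)/Σ)( μ − r − σ b ρ_W G_z/G ). -/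

import Mathlib

open MeasureTheory Set

/-- Maximum of a downward parabola `c x² + d x` (with `c < 0`). -/
theorem quadmax (c d x x0 : ℝ) (hc : c < 0) (hx0 : x0 = -d/(2*c)) :
    c*x^2 + d*x ≤ c*x0^2 + d*x0 := by
  have hc0 : c ≠ 0 := ne_of_lt hc
  have h : c*x0^2 + d*x0 - (c*x^2 + d*x) = (-c) * (x - x0)^2 := by
    rw [hx0]; field_simp; ring
  nlinarith [mul_nonneg (by linarith : (0:ℝ) ≤ -c) (sq_nonneg (x - x0))]

/-- Value form of the parabola maximum. -/
theorem quadmax' (c d x : ℝ) (hc : c < 0) : c*x^2 + d*x ≤ -d^2/(4*c) := by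
  have hc0 : c ≠ 0 := ne_of_lt hc
  have h := quadmax c d x (-d/(2*c)) hc rfl
  have h2 : c*(-d/(2*c))^2 + d*(-d/(2*c)) = -d^2/(4*c) := by field_simp; ring
  linarith

set_option maxHeartbeats 2000000 in
theorem minmax_generator
    (a b σ μ r ρW ρbW : ℝ) (hρ : ρW ^ 2 + ρbW ^ 2 = 1)
    (ν : Measure ℝ) [IsFiniteMeasure ν]
    (γ : ℝ → ℝ) (hγmeas : Measurable γ)
    (hγL2 : Integrable (fun p => (γ p)^2) ν)
    (m : ℝ) (hm : m = ∫ p, (γ p)^2 ∂ν)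
    (Sig : ℝ) (hSig : Sig = σ^2 + m) (hSigpos : 0 < Sig)
    (y G Gz Gzz Gt : ℝ) (hy : 0 < y) (hG : G < 0)
    (α β lam : ℝ)
    (hα : α = a - 2 * ρW * σ * b * (μ - r) / Sig)
    (hβ : β = (ρbW^2 * σ^2 + m) / Sig)
    (hlam : lam = (μ - r)^2 / Sig)
    (A : ℝ → ℝ → ℝ → (ℝ → ℝ) → ℝ)
    (hA : ∀ (π η₁ η₂ : ℝ) (φ : ℝ → ℝ), A π η₁ η₂ φ =
      y * Gt - π * (μ - r + σ * η₁ - ∫ p, γ p ∂ν)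
        + y * G * (η₁^2 + η₂^2 - ∫ p, φ p ∂ν)
        + y * Gz * (a + b * (ρW * η₁ + ρbW * η₂))
        + (1/2) * y * Gzz * b^2
        + y * Gz * b * (ρW * η₁ + ρbW * η₂)
        + ∫ p, (-(π * γ p) + y * G * φ p) * (1 + φ p) ∂ν)
    (πs η₁s η₂s : ℝ) (φs : ℝ → ℝ)
    (hπs : πs = -(2 * y * G / Sig) * (μ - r - σ * b * ρW * Gz / G))
    (hη₁s : η₁s = -(σ * (μ - r) / Sig) - ρW * b * (m / Sig) * (Gz / G))
    (hη₂s : η₂s = -(Gz * b * ρbW) / G)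
    (hφs : ∀ p, φs p = -(γ p / Sig) * (μ - r - σ * b * ρW * Gz / G)) :
    MemLp φs 2 ν ∧
    -- saddle point: (η₁*,η₂*,φ*) maximizes the inner problem at π = π* ...
    (∀ (η₁ η₂ : ℝ) (φ : ℝ → ℝ), MemLp φ 2 ν → A πs η₁ η₂ φ ≤ A πs η₁s η₂s φs) ∧
    -- ... and π* minimizes the outer problem at (η₁*,η₂*,φ*)
    (∀ π : ℝ, A πs η₁s η₂s φs ≤ A π η₁s η₂s φs) ∧
    -- the min–sup value
    sInf {s : ℝ | ∃ π : ℝ,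
        s = sSup {v : ℝ | ∃ (η₁ η₂ : ℝ) (φ : ℝ → ℝ), MemLp φ 2 ν ∧ v = A π η₁ η₂ φ}}
      = y * (Gt + α * Gz + (1/2) * b^2 * Gzz - β * b^2 * Gz^2 / G + lam * G) ∧
    A πs η₁s η₂s φs
      = y * (Gt + α * Gz + (1/2) * b^2 * Gzz - β * b^2 * Gz^2 / G + lam * G) := by
  have hG0 : G ≠ 0 := ne_of_lt hG
  have hy0 : y ≠ 0 := ne_of_gt hy
  have hS0 : Sig ≠ 0 := ne_of_gt hSigpos
  have hyG : y * G < 0 := mul_neg_of_pos_of_neg hy hG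
  have hyG0 : y * G ≠ 0 := ne_of_lt hyG
  have hmval : m = Sig - σ^2 := by rw [hSig]; ring
  have hρb : ρbW^2 = 1 - ρW^2 := by linarith
  have hγ2 : MemLp γ 2 ν := (memLp_two_iff_integrable_sq hγmeas.aestronglyMeasurable).2 hγL2
  have hγ1 : Integrable γ ν := hγ2.integrable (by norm_num)
  have hmemc : ∀ c : ℝ, MemLp (fun p => c * γ p) 2 ν := fun c => hγ2.const_mul c
  -- integrability of the quadratic integrand
  have hJInt : ∀ (π : ℝ) (φ : ℝ → ℝ), MemLp φ 2 ν →
      Integrable (fun p => y*G*(φ p)^2 - π*(γ p * φ p) - π*(γ p)) ν := by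
    intro π φ hφ
    have hφsq : Integrable (fun p => (φ p)^2) ν :=
      (memLp_two_iff_integrable_sq hφ.aestronglyMeasurable).1 hφ
    have hγφ : Integrable (fun p => γ p * φ p) ν := by
      refine Integrable.mono' ((hγL2.add hφsq).const_mul (1/2))
        (hγmeas.aestronglyMeasurable.mul hφ.aestronglyMeasurable) ?_
      filter_upwards with p
      simp only [Pi.add_apply]
      rw [Real.norm_eq_abs, abs_mul]
      nlinarith [sq_nonneg (|γ p| - |φ p|), abs_nonneg (γ p), abs_nonneg (φ p),
        sq_abs (γ p), sq_abs (φ p)]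
    exact ((hφsq.const_mul (y*G)).sub (hγφ.const_mul π)).sub (hγ1.const_mul π)
  -- rewriting of A in separated form
  have hArw : ∀ (π η₁ η₂ : ℝ) (φ : ℝ → ℝ), MemLp φ 2 ν →
      A π η₁ η₂ φ =
        (y*Gt + y*Gz*a + (1/2)*y*Gzz*b^2 + π*(∫ p, γ p ∂ν) - π*(μ-r))
        + (y*G*η₁^2 + (2*y*Gz*b*ρW - π*σ)*η₁)
        + (y*G*η₂^2 + (2*y*Gz*b*ρbW)*η₂)
        + ∫ p, (y*G*(φ p)^2 - π*(γ p * φ p) - π*(γ p)) ∂ν := by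
    intro π η₁ η₂ φ hφ
    have hφ1 : Integrable φ ν := hφ.integrable (by norm_num)
    have h1 : ∫ p, (-(π * γ p) + y * G * φ p) * (1 + φ p) ∂ν
        = (∫ p, (y*G*(φ p)^2 - π*(γ p * φ p) - π*(γ p)) ∂ν)
          + y*G*(∫ p, φ p ∂ν) := by
      rw [← integral_const_mul, ← integral_add (hJInt π φ hφ) (hφ1.const_mul (y*G))]
      congr 1; funext p; ring
    rw [hA, h1]; ring
  -- value of the quadratic integral on multiples of γ
  have hJint : ∀ (π c : ℝ),
      (∫ p, (y*G*(c*γ p)^2 - π*(γ p * (c*γ p)) - π*(γ p)) ∂ν)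
        = (y*G*c^2 - π*c)*m - π*(∫ p, γ p ∂ν) := by
    intro π c
    have h : ∀ p, y*G*(c*γ p)^2 - π*(γ p * (c*γ p)) - π*(γ p)
        = (y*G*c^2 - π*c)*((γ p)^2) + (-π)*(γ p) := fun p => by ring
    simp only [h]
    rw [integral_add (hγL2.const_mul _) (hγ1.const_mul _), integral_const_mul,
      integral_const_mul, ← hm]
    ring
  -- value of A on multiples of γ
  have hAc : ∀ (π η₁ η₂ c : ℝ), A π η₁ η₂ (fun p => c * γ p)
      = (y*Gt + y*Gz*a + (1/2)*y*Gzz*b^2 + π*(∫ p, γ p ∂ν) - π*(μ-r))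
        + (y*G*η₁^2 + (2*y*Gz*b*ρW - π*σ)*η₁)
        + (y*G*η₂^2 + (2*y*Gz*b*ρbW)*η₂)
        + ((y*G*c^2 - π*c)*m - π*(∫ p, γ p ∂ν)) := by
    intro π η₁ η₂ c
    rw [hArw π η₁ η₂ _ (hmemc c)]
    congr 1
    exact hJint π c
  -- the maximal value function F
  set F : ℝ → ℝ := fun π =>
    y*Gt + y*Gz*a + (1/2)*y*Gzz*b^2 - π*(μ-r)
      - (2*y*Gz*b*ρW - π*σ)^2/(4*(y*G)) - y*Gz^2*b^2*ρbW^2/G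
      - π^2*m/(4*(y*G)) with hFdef
  -- upper bound: A π η₁ η₂ φ ≤ F π
  have hub : ∀ (π η₁ η₂ : ℝ) (φ : ℝ → ℝ), MemLp φ 2 ν → A π η₁ η₂ φ ≤ F π := by
    intro π η₁ η₂ φ hφ
    rw [hArw π η₁ η₂ φ hφ]
    have hq1 : y*G*η₁^2 + (2*y*Gz*b*ρW - π*σ)*η₁
        ≤ -(2*y*Gz*b*ρW - π*σ)^2/(4*(y*G)) := quadmax' _ _ _ hyG
    have hq2 : y*G*η₂^2 + (2*y*Gz*b*ρbW)*η₂ ≤ -(y*Gz^2*b^2*ρbW^2)/G := by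
      have h := quadmax' (y*G) (2*y*Gz*b*ρbW) η₂ hyG
      have he : -(2*y*Gz*b*ρbW)^2/(4*(y*G)) = -(y*Gz^2*b^2*ρbW^2)/G := by
        field_simp; ring
      linarith
    have hintle : (∫ p, (y*G*(φ p)^2 - π*(γ p * φ p) - π*(γ p)) ∂ν)
        ≤ -π^2*m/(4*(y*G)) - π*(∫ p, γ p ∂ν) := by
      have hpt : ∀ p, y*G*(φ p)^2 - π*(γ p * φ p) - π*(γ p)
          ≤ y*G*((π/(2*(y*G)))*γ p)^2 - π*(γ p * ((π/(2*(y*G)))*γ p)) - π*(γ p) := by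
        intro p
        have h := quadmax (y*G) (-(π*γ p)) (φ p) ((π/(2*(y*G)))*γ p) hyG
          (by field_simp)
        have e1 : y*G*(φ p)^2 - π*(γ p * φ p) - π*(γ p)
            = (y*G*(φ p)^2 + (-(π*γ p))*(φ p)) - π*(γ p) := by ring
        have e2 : y*G*((π/(2*(y*G)))*γ p)^2 - π*(γ p * ((π/(2*(y*G)))*γ p)) - π*(γ p)
            = (y*G*((π/(2*(y*G)))*γ p)^2 + (-(π*γ p))*((π/(2*(y*G)))*γ p)) - π*(γ p) := by
          ring
        linarith
      have hle : (∫ p, (y*G*(φ p)^2 - π*(γ p * φ p) - π*(γ p)) ∂ν)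
          ≤ ∫ p, (y*G*((π/(2*(y*G)))*γ p)^2 - π*(γ p * ((π/(2*(y*G)))*γ p)) - π*(γ p)) ∂ν :=
        integral_mono (hJInt π φ hφ) (hJInt π (fun p => (π/(2*(y*G)))*γ p) (hmemc _)) hpt
      have heq := hJint π (π/(2*(y*G)))
      have hval2 : (y*G*(π/(2*(y*G)))^2 - π*(π/(2*(y*G))))*m = -π^2*m/(4*(y*G)) := by
        field_simp; ring
      linarith
    have hFval : F π
        = (y*Gt + y*Gz*a + (1/2)*y*Gzz*b^2 + π*(∫ p, γ p ∂ν) - π*(μ-r))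
          + (-(2*y*Gz*b*ρW - π*σ)^2/(4*(y*G))) + (-(y*Gz^2*b^2*ρbW^2)/G)
          + (-π^2*m/(4*(y*G)) - π*(∫ p, γ p ∂ν)) := by
      simp only [hFdef]; ring
    linarith
  -- the maximum is attained
  have hSv_eqF : ∀ π : ℝ,
      A π ((π*σ - 2*y*Gz*b*ρW)/(2*(y*G))) η₂s (fun p => π/(2*(y*G)) * γ p) = F π := by
    intro π
    rw [hAc π ((π*σ - 2*y*Gz*b*ρW)/(2*(y*G))) η₂s (π/(2*(y*G)))]
    simp only [hFdef]
    rw [hη₂s]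
    field_simp
    ring
  have hGreat : ∀ π : ℝ, IsGreatest
      {v : ℝ | ∃ (η₁ η₂ : ℝ) (φ : ℝ → ℝ), MemLp φ 2 ν ∧ v = A π η₁ η₂ φ} (F π) := by
    intro π
    constructor
    · exact ⟨(π*σ - 2*y*Gz*b*ρW)/(2*(y*G)), η₂s, fun p => π/(2*(y*G)) * γ p,
        hmemc _, (hSv_eqF π).symm⟩
    · rintro v ⟨η₁, η₂, φ, hφ, rfl⟩
      exact hub π η₁ η₂ φ hφ
  -- φs is a multiple of γ
  have hφc : φs = fun p => πs/(2*(y*G)) * γ p := by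
    funext p
    rw [hφs, hπs]
    field_simp
  have hφsL2 : MemLp φs 2 ν := by rw [hφc]; exact hmemc _
  -- A at the saddle equals F πs
  have hstar : A πs η₁s η₂s φs = F πs := by
    rw [hφc, hAc πs η₁s η₂s (πs/(2*(y*G)))]
    simp only [hFdef]
    rw [hη₁s, hη₂s, hπs, hmval]
    field_simp
    ring
  -- monotonicity : F πs is the min of F
  have hmono : ∀ π : ℝ, F πs ≤ F π := by
    intro π
    have hdiff : F π - F πs = (-Sig)/(4*(y*G))*(π - πs)^2 := by
      simp only [hFdef]
      rw [hπs, hmval]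
      field_simp
      ring
    have h4 : (4:ℝ)*(y*G) < 0 := by nlinarith
    have hpos : 0 ≤ (-Sig)/(4*(y*G))*(π - πs)^2 :=
      mul_nonneg (le_of_lt (div_pos_of_neg_of_neg (by linarith) h4)) (sq_nonneg _)
    rw [← sub_nonneg, hdiff]
    exact hpos
  -- the value
  have hval : F πs = y * (Gt + α * Gz + (1/2) * b^2 * Gzz - β * b^2 * Gz^2 / G + lam * G) := by
    simp only [hFdef]
    rw [hπs, hα, hβ, hlam, hρb, hmval]
    field_simp
    ring
  -- constancy in π at the starred inner point
  have hconst : ∀ π : ℝ, A π η₁s η₂s φs = A πs η₁s η₂s φs := by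
    intro π
    rw [hφc, hAc π η₁s η₂s (πs/(2*(y*G))), hAc πs η₁s η₂s (πs/(2*(y*G))),
      hη₁s, hπs, hmval]
    field_simp
    ring
  refine ⟨hφsL2, ?_, ?_, ?_, ?_⟩
  · intro η₁ η₂ φ hφ
    rw [hstar]
    exact hub πs η₁ η₂ φ hφ
  · intro π
    exact le_of_eq (hconst π).symm
  · have hsup_eq : ∀ π : ℝ,
        sSup {v : ℝ | ∃ (η₁ η₂ : ℝ) (φ : ℝ → ℝ), MemLp φ 2 ν ∧ v = A π η₁ η₂ φ} = F π :=
      fun π => (hGreat π).csSup_eq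
    simp only [hsup_eq]
    have hleast : IsLeast {s : ℝ | ∃ π : ℝ, s = F π} (F πs) :=
      ⟨⟨πs, rfl⟩, by rintro s ⟨π, rfl⟩; exact hmono π⟩
    rw [hleast.csInf_eq, hval]
  · rw [hstar, hval]
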